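/- Fix integers d ≥ 2, n ≥ 2, a target position p with 1 ≤ p ≤ n − 1, and a prefix c : Fin p → Fin d whose last digit satisfies c (p−1) = d − 1. Define the successor prefix c' : Fin (p−1) → Fin d as the restriction of c to its first p − 1 coordinates, with successor target position p − 1. Let Z = {s : s i = c i for all i < p, s p ≠ 0, and s i = 0 for all i > p}. Then R1(p,c) ∪ R2(p,c) ∪ R3(p,c) = R1(p−1,c') ∪ R2(p−1,c') ∪ R3(p−1,c') ∪ Z, and the four sets R1(p−1,c'), R2(p−1,c'), R3(p−1,c'), Z are pairwise disjoint. -/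
import Mathlib


/-- `R2(p,c)`: strings agreeing with the prefix `c` on coordinates `< p` and
zero on coordinates `> p`. -/
def R2 (d n p : ℕ) (hp : p < n) (c : Fin p → Fin d) : Set (Fin n → Fin d) :=
  {s | (∀ i : Fin p, s (Fin.castLE hp.le i) = c i) ∧
       ∀ i : Fin n, p < (i : ℕ) → (s i : ℕ) = 0}

/-- `R3(p,c)`: strings whose restriction to coordinates `0,…,p−1` is strictly
lex-greater than `c` (coordinate 0 most significant). -/
def R3 (d n p : ℕ) (hp : p < n) (c : Fin p → Fin d) : Set (Fin n → Fin d) :=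
  {s | ∃ q : Fin p, (∀ i : Fin p, (i : ℕ) < (q : ℕ) → s (Fin.castLE hp.le i) = c i) ∧
       (c q : ℕ) < (s (Fin.castLE hp.le q) : ℕ)}

/-- `R1(p,c)`: strings agreeing with `c` up to some `q < p`, strictly smaller
than `c` at `q`, and zero beyond `q`. -/
def R1 (d n p : ℕ) (hp : p < n) (c : Fin p → Fin d) : Set (Fin n → Fin d) :=
  {s | ∃ q : Fin p, (∀ i : Fin p, (i : ℕ) < (q : ℕ) → s (Fin.castLE hp.le i) = c i) ∧
       (s (Fin.castLE hp.le q) : ℕ) < (c q : ℕ) ∧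
       ∀ i : Fin n, (q : ℕ) < (i : ℕ) → (s i : ℕ) = 0}

set_option maxHeartbeats 4000000 in
/-- Lemma (Zlemma), Appendix A, case `c_{p−1} = d − 1`: passing to the next
♣-sequence term (whose prefix is `c` with its last digit dropped) splits
`R1 ∪ R2 ∪ R3` into the successor sets plus the newly zeroed set `Z`,
disjointly. -/
theorem Zlemma_pop (d n p : ℕ) (hd : 2 ≤ d) (hn : 2 ≤ n)
    (hp1 : 1 ≤ p) (hp2 : p ≤ n - 1)
    (c : Fin p → Fin d) (hlast : (c ⟨p - 1, by omega⟩ : ℕ) = d - 1)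
    (c' : Fin (p - 1) → Fin d)
    (hc' : ∀ i : Fin (p - 1), c' i = c ⟨i, by omega⟩)
    (Z : Set (Fin n → Fin d))
    (hZ : Z = {s | (∀ i : Fin p, s (Fin.castLE (by omega) i) = c i) ∧
        (s ⟨p, by omega⟩ : ℕ) ≠ 0 ∧ ∀ i : Fin n, p < (i : ℕ) → (s i : ℕ) = 0}) :
    (R1 d n p (by omega) c ∪ R2 d n p (by omega) c ∪ R3 d n p (by omega) c
      = R1 d n (p - 1) (by omega) c' ∪ R2 d n (p - 1) (by omega) c' ∪
        R3 d n (p - 1) (by omega) c' ∪ Z) ∧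
    R1 d n (p - 1) (by omega) c' ∩ R2 d n (p - 1) (by omega) c' = ∅ ∧
    R1 d n (p - 1) (by omega) c' ∩ R3 d n (p - 1) (by omega) c' = ∅ ∧
    R1 d n (p - 1) (by omega) c' ∩ Z = ∅ ∧
    R2 d n (p - 1) (by omega) c' ∩ R3 d n (p - 1) (by omega) c' = ∅ ∧
    R2 d n (p - 1) (by omega) c' ∩ Z = ∅ ∧
    R3 d n (p - 1) (by omega) c' ∩ Z = ∅ := by

  subst hZ
  have hpn : p < n := by omega
  have hln : p - 1 < n := by omega
  constructor
  · ext s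
    simp only [R1, R2, R3, Set.mem_union, Set.mem_setOf_eq]
    constructor
    · rintro ((⟨q, hq1, hq2, hq3⟩ | ⟨h1, h2⟩) | ⟨q, hq1, hq2⟩)
      · -- R1 p c
        have hqp : (q : ℕ) < p := q.isLt
        rcases Nat.lt_or_ge (q : ℕ) (p - 1) with hlt | hge
        · left; left; left
          refine ⟨⟨(q : ℕ), hlt⟩, ?_, ?_, ?_⟩
          · intro i hi
            rw [hc']
            exact hq1 ⟨(i : ℕ), by omega⟩ hi
          · rw [hc']
            exact hq2
          · intro i hi
            exact hq3 i hi
        · -- q = p - 1 : goes to R2(p-1, c')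
          left; left; right
          refine ⟨?_, ?_⟩
          · intro i
            have hi := i.isLt
            rw [hc']
            exact hq1 ⟨(i : ℕ), by omega⟩ (show (i : ℕ) < (q : ℕ) by omega)
          · intro i hi
            exact hq3 i (by omega)
      · -- R2 p c
        by_cases h0 : (s ⟨p, hpn⟩ : ℕ) = 0
        · left; left; right
          refine ⟨?_, ?_⟩
          · intro i
            rw [hc']
            exact h1 ⟨(i : ℕ), by omega⟩
          · intro i hi
            rcases Nat.lt_or_ge p (i : ℕ) with h | h
            · exact h2 i h
            · have hip : i = ⟨p, hpn⟩ := Fin.ext (show (i : ℕ) = p by omega)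
              rw [hip]; exact h0
        · right
          exact ⟨h1, h0, h2⟩
      · -- R3 p c
        have hqp : (q : ℕ) < p := q.isLt
        have hne : (q : ℕ) ≠ p - 1 := by
          intro h
          have hcq : (c q : ℕ) = d - 1 := by
            have hpl : p - 1 < p := by omega
            have hq : q = ⟨p - 1, hpl⟩ := Fin.ext h
            rw [hq]; exact hlast
          exact absurd hq2 (not_lt.mpr (by
            rw [hcq]
            exact Nat.le_sub_one_of_lt (Fin.is_lt _)))
        left; right
        have hql : (q : ℕ) < p - 1 := by omega
        refine ⟨⟨(q : ℕ), hql⟩, ?_, ?_⟩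
        · intro i hi
          rw [hc']
          exact hq1 ⟨(i : ℕ), by omega⟩ hi
        · rw [hc']
          exact hq2
    · rintro (((⟨q, hq1, hq2, hq3⟩ | ⟨h1, h2⟩) | ⟨q, hq1, hq2⟩) | ⟨h1, h0, h2⟩)
      · -- R1 (p-1) c'
        have hqp : (q : ℕ) < p - 1 := q.isLt
        left; left
        have hql : (q : ℕ) < p := by omega
        refine ⟨⟨(q : ℕ), hql⟩, ?_, ?_, ?_⟩
        · intro i hi
          have hin : (i : ℕ) < p - 1 := by omega
          have h := hq1 ⟨(i : ℕ), hin⟩ hi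
          rwa [hc'] at h
        · rw [hc'] at hq2
          exact hq2
        · intro i hi
          exact hq3 i hi
      · -- R2 (p-1) c'
        rcases Nat.lt_or_ge (s ⟨p - 1, hln⟩ : ℕ) (d - 1) with hlt | hge
        · -- into R1 p c with q = p - 1
          left; left
          have hpl : p - 1 < p := by omega
          refine ⟨⟨p - 1, hpl⟩, ?_, ?_, ?_⟩
          · intro i hi
            have hin : (i : ℕ) < p - 1 := by omega
            have h := h1 ⟨(i : ℕ), hin⟩
            rwa [hc'] at h
          · exact lt_of_lt_of_eq hlt hlast.symm
          · intro i hi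
            exact h2 i hi
        · -- s at p-1 equals d-1 : into R2 p c
          have hse : (s ⟨p - 1, hln⟩ : ℕ) = d - 1 :=
            le_antisymm (Nat.le_sub_one_of_lt (Fin.is_lt _)) hge
          left; right
          refine ⟨?_, ?_⟩
          · intro i
            have hip : (i : ℕ) < p := i.isLt
            rcases Nat.lt_or_ge (i : ℕ) (p - 1) with h | h
            · have hh := h1 ⟨(i : ℕ), h⟩
              rwa [hc'] at hh
            · have hpl2 : p - 1 < p := by omega
              have hie : i = ⟨p - 1, hpl2⟩ := Fin.ext (show (i : ℕ) = p - 1 by omega)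
              rw [hie]
              exact Fin.ext (hse.trans hlast.symm)
          · intro i hi
            exact h2 i (by omega)
      · -- R3 (p-1) c'
        have hqp : (q : ℕ) < p - 1 := q.isLt
        right
        have hql : (q : ℕ) < p := by omega
        refine ⟨⟨(q : ℕ), hql⟩, ?_, ?_⟩
        · intro i hi
          have hin : (i : ℕ) < p - 1 := by omega
          have h := hq1 ⟨(i : ℕ), hin⟩ hi
          rwa [hc'] at h
        · rw [hc'] at hq2
          exact hq2
      · -- Z : into R2 p c
        left; right
        exact ⟨h1, h2⟩
  refine ⟨?_, ?_, ?_, ?_, ?_, ?_⟩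
  · -- R1 ∩ R2
    apply Set.eq_empty_iff_forall_notMem.mpr
    rintro s ⟨⟨q, hq1, hq2, hq3⟩, h1, h2⟩
    rw [h1 q] at hq2
    exact lt_irrefl _ hq2
  · -- R1 ∩ R3
    apply Set.eq_empty_iff_forall_notMem.mpr
    rintro s ⟨⟨q, hq1, hq2, hq3⟩, ⟨r, hr1, hr2⟩⟩
    rcases lt_trichotomy (q : ℕ) (r : ℕ) with h | h | h
    · rw [hr1 q h] at hq2
      exact lt_irrefl _ hq2
    · have hqr : q = r := Fin.ext h
      rw [hqr] at hq2
      exact absurd hr2 (not_lt.mpr (le_of_lt hq2))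
    · rw [hq1 r h] at hr2
      exact lt_irrefl _ hr2
  · -- R1 ∩ Z
    apply Set.eq_empty_iff_forall_notMem.mpr
    rintro s ⟨⟨q, hq1, hq2, hq3⟩, g1, g0, g2⟩
    have hqp : (q : ℕ) < p - 1 := q.isLt
    have hql : (q : ℕ) < p := by omega
    rw [hc'] at hq2
    exact absurd hq2 (not_lt.mpr (le_of_eq
      (congrArg Fin.val (g1 ⟨(q : ℕ), hql⟩)).symm))
  · -- R2 ∩ R3
    apply Set.eq_empty_iff_forall_notMem.mpr
    rintro s ⟨⟨h1, h2⟩, ⟨q, hq1, hq2⟩⟩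
    rw [h1 q] at hq2
    exact lt_irrefl _ hq2
  · -- R2 ∩ Z
    apply Set.eq_empty_iff_forall_notMem.mpr
    rintro s ⟨⟨h1, h2⟩, g1, g0, g2⟩
    exact g0 (h2 ⟨p, hpn⟩ (show p - 1 < p by omega))
  · -- R3 ∩ Z
    apply Set.eq_empty_iff_forall_notMem.mpr
    rintro s ⟨⟨q, hq1, hq2⟩, g1, g0, g2⟩
    have hqp : (q : ℕ) < p - 1 := q.isLt
    have hql : (q : ℕ) < p := by omega
    rw [hc'] at hq2
    exact absurd hq2 (not_lt.mpr (le_of_eq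
      (congrArg Fin.val (g1 ⟨(q : ℕ), hql⟩))))
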